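/- arXiv:2408.12923 — 2 statements merged into one kernel-verified Lean document; each statement's English description precedes it below -/
import Mathlib

section
/- One has $\frac{\sqrt{2}+1}{2}\int_{-\pi}^{\pi} \frac{\sqrt{2}\,(1-\cos k)^2 - \sin^2 k}{\sqrt{(1-\cos k)(3-\cos k)}}\,\frac{dk}{2\pi} \;=\; -\frac{1}{2} - \frac{\sqrt{2}}{2} + \frac{(\sqrt{2}+1)^2}{\pi}$, where the integral is over $[-\pi,\pi]$ with respect to Lebesgue measure divided by $2\pi$. -/
open MeasureTheory Real

noncomputable def FF (k : ℝ) : ℝ :=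
  4 * Real.arcsin (Real.cos (k/2) / Real.sqrt 2)
    - 2*(Real.sqrt 2 + 1) * (Real.cos (k/2) * Real.sqrt (2 - Real.cos (k/2)^2))

noncomputable def GG (k : ℝ) : ℝ :=
  2 * Real.sin (k/2) * ((Real.sqrt 2 + 1) * Real.sin (k/2)^2 - 1) /
    Real.sqrt (2 - Real.cos (k/2)^2)

lemma sqrt2_pos : (0:ℝ) < Real.sqrt 2 := Real.sqrt_pos.mpr (by norm_num)

lemma one_lt_sqrt2 : (1:ℝ) < Real.sqrt 2 := by
  rw [show (1:ℝ) = Real.sqrt 1 by simp]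
  exact Real.sqrt_lt_sqrt (by norm_num) (by norm_num)

lemma two_sub_cos_sq_pos (x : ℝ) : (1:ℝ) ≤ 2 - Real.cos x ^ 2 := by
  nlinarith [Real.neg_one_le_cos x, Real.cos_le_one x]

lemma qq_ne (k : ℝ) : Real.sqrt (2 - Real.cos (k/2)^2) ≠ 0 :=
  ne_of_gt (Real.sqrt_pos.mpr (by nlinarith [two_sub_cos_sq_pos (k/2)]))

lemma hasDerivAt_FF (k : ℝ) : HasDerivAt FF (GG k) k := by
  set c := Real.cos (k/2) with hc
  set s := Real.sin (k/2) with hs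
  have hsc : s^2 + c^2 = 1 := Real.sin_sq_add_cos_sq _
  have hpos : (1:ℝ) ≤ 2 - c^2 := two_sub_cos_sq_pos (k/2)
  have hqpos : 0 < Real.sqrt (2 - c^2) := Real.sqrt_pos.mpr (by linarith)
  have hq2 : Real.sqrt (2 - c^2) ^ 2 = 2 - c^2 := Real.sq_sqrt (by linarith)
  have h2 : Real.sqrt 2 ^ 2 = 2 := Real.sq_sqrt (by norm_num)
  have habs : |c / Real.sqrt 2| < 1 := by
    rw [abs_div, abs_of_nonneg (Real.sqrt_nonneg 2)]
    rw [div_lt_one sqrt2_pos]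
    calc |c| ≤ 1 := Real.abs_cos_le_one _
    _ < Real.sqrt 2 := one_lt_sqrt2
  have hhalf : HasDerivAt (fun x : ℝ => x/2) (1/2) k := (hasDerivAt_id k).div_const 2
  have hdc : HasDerivAt (fun x : ℝ => Real.cos (x/2)) (-s * (1/2)) k := by
    exact (Real.hasDerivAt_cos (k/2)).comp k hhalf
  have hds2 : HasDerivAt (fun x : ℝ => 2 - Real.cos (x/2)^2) (c * s) k := by
    have := (hasDerivAt_const k (2:ℝ)).sub (hdc.fun_pow 2)
    refine this.congr_deriv ?_
    push_cast
    rw [hc]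
    ring
  have hdsqrt : HasDerivAt (fun x : ℝ => Real.sqrt (2 - Real.cos (x/2)^2))
      (1 / (2 * Real.sqrt (2 - c^2)) * (c * s)) k := by
    exact (Real.hasDerivAt_sqrt (by nlinarith : 2 - c^2 ≠ 0)).comp k hds2
  have hdarc : HasDerivAt (fun x : ℝ => Real.arcsin (Real.cos (x/2) / Real.sqrt 2))
      (1 / Real.sqrt (1 - (c / Real.sqrt 2)^2) * (-s*(1/2) / Real.sqrt 2)) k := by
    exact (Real.hasDerivAt_arcsin (by nlinarith [abs_nonneg (c / Real.sqrt 2), neg_abs_le (c / Real.sqrt 2)] : c / Real.sqrt 2 ≠ -1)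
      (by nlinarith [le_abs_self (c / Real.sqrt 2)] : c / Real.sqrt 2 ≠ 1)).comp k (hdc.div_const _)
  have hdF : HasDerivAt FF
      (4 * (1 / Real.sqrt (1 - (c / Real.sqrt 2)^2) * (-s*(1/2) / Real.sqrt 2))
        - 2*(Real.sqrt 2 + 1) * ((-s*(1/2)) * Real.sqrt (2 - c^2)
            + c * (1 / (2 * Real.sqrt (2 - c^2)) * (c * s)))) k := by
    exact (hdarc.const_mul 4).sub ((hdc.mul hdsqrt).const_mul (2*(Real.sqrt 2 + 1)))
  convert hdF using 1
  have e1 : 1 - (c / Real.sqrt 2)^2 = (2 - c^2)/2 := by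
    rw [div_pow, h2]; ring
  have e2 : Real.sqrt (1 - (c / Real.sqrt 2)^2) = Real.sqrt (2 - c^2) / Real.sqrt 2 := by
    rw [e1, Real.sqrt_div (by linarith)]
  have hq : Real.sqrt (2 - c^2) ≠ 0 := ne_of_gt hqpos
  have hs2 : Real.sqrt 2 ≠ 0 := ne_of_gt sqrt2_pos
  have hGG : GG k = 2*s*((Real.sqrt 2 + 1)*s^2-1)/Real.sqrt (2-c^2) := by
    rw [GG, ← hc, ← hs]
  rw [hGG, e2]
  generalize hQ : Real.sqrt (2 - c^2) = q at *
  generalize hR : Real.sqrt 2 = r at *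
  field_simp
  linear_combination (-(2*(r+1)*s)) * hq2 + (4*(r+1)*s) * hsc


lemma contGG : Continuous GG := by
  apply Continuous.div
  · fun_prop
  · exact Real.continuous_sqrt.comp (by fun_prop)
  · exact fun k => qq_ne k

lemma integral_GG : ∫ k in (0:ℝ)..π, GG k = 2*(Real.sqrt 2 + 1) - π := by
  rw [intervalIntegral.integral_eq_sub_of_hasDerivAt (fun x _ => hasDerivAt_FF x)
    (contGG.intervalIntegrable 0 π)]
  have h1 : FF π = 0 := by
    simp [FF, Real.cos_pi_div_two]
  have h2 : FF 0 = π - 2*(Real.sqrt 2 + 1) := by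
    have ha : Real.arcsin (1 / Real.sqrt 2) = π/4 := by
      have : (1:ℝ) / Real.sqrt 2 = Real.sin (π/4) := by
        rw [Real.sin_pi_div_four]
        rw [div_eq_div_iff (ne_of_gt sqrt2_pos) (by norm_num)]
        nlinarith [Real.sq_sqrt (show (0:ℝ) ≤ 2 by norm_num)]
      rw [this, Real.arcsin_sin (by nlinarith [pi_pos]) (by nlinarith [pi_pos])]
    simp only [FF]
    norm_num
    rw [← one_div, ha]
    ring
  rw [h1, h2]; ring

lemma ff_eq_GG (k : ℝ) (hnn : 0 ≤ Real.sin (k/2)) :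
    (Real.sqrt 2 * (1 - Real.cos k) ^ 2 - Real.sin k ^ 2) /
      Real.sqrt ((1 - Real.cos k) * (3 - Real.cos k)) = GG k := by
  set c := Real.cos (k/2) with hcdef
  set s := Real.sin (k/2) with hsdef
  have hsc : s^2 + c^2 = 1 := Real.sin_sq_add_cos_sq _
  have hpos : (1:ℝ) ≤ 2 - c^2 := two_sub_cos_sq_pos (k/2)
  have hqpos : 0 < Real.sqrt (2 - c^2) := Real.sqrt_pos.mpr (by linarith)
  have hck : Real.cos k = 2*c^2 - 1 := by
    rw [show k = 2*(k/2) by ring, Real.cos_two_mul, ← hcdef]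
  have hsk : Real.sin k = 2*s*c := by
    rw [show k = 2*(k/2) by ring, Real.sin_two_mul]
  have h1 : (1 - Real.cos k) * (3 - Real.cos k) = (2*s)^2 * (2 - c^2) := by
    rw [hck]; linear_combination (-4*(2-c^2)) * hsc
  have h2 : Real.sqrt ((1 - Real.cos k) * (3 - Real.cos k)) = 2*s*Real.sqrt (2-c^2) := by
    rw [h1, Real.sqrt_mul (sq_nonneg _), Real.sqrt_sq (by linarith : (0:ℝ) ≤ 2*s)]
  have h3 : Real.sqrt 2 * (1 - Real.cos k)^2 - Real.sin k ^ 2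
      = 4*s^2*((Real.sqrt 2 + 1)*s^2 - 1) := by
    rw [hck, hsk]
    linear_combination (4*Real.sqrt 2 * (s^2 + c^2 - 1) - 8*Real.sqrt 2*s^2 - 4*s^2 - 4*Real.sqrt 2 - 4 + 4 + 4*Real.sqrt 2) * hsc
  have hGG : GG k = 2*s*((Real.sqrt 2 + 1)*s^2-1)/Real.sqrt (2-c^2) := by
    rw [GG, ← hcdef, ← hsdef]
  rw [h2, h3, hGG]
  rcases eq_or_lt_of_le hnn with h0 | h0
  · rw [← h0]; simp
  · rw [div_eq_div_iff (by positivity) (ne_of_gt hqpos)]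
    ring

/-- `((√2+1)/2) ∫_{-π}^{π} (√2 (1-cos k)² - sin² k)/√((1-cos k)(3-cos k)) dk/(2π)
      = -1/2 - √2/2 + (√2+1)²/π`. -/
theorem stmt_4 :
    (Real.sqrt 2 + 1) / 2 *
      ((∫ k in Set.Icc (-π) π,
          (Real.sqrt 2 * (1 - Real.cos k) ^ 2 - Real.sin k ^ 2) /
            Real.sqrt ((1 - Real.cos k) * (3 - Real.cos k))) / (2 * π))
      = -(1 / 2) - Real.sqrt 2 / 2 + (Real.sqrt 2 + 1) ^ 2 / π := by
  have hπ := pi_pos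
  set f : ℝ → ℝ := fun k => (Real.sqrt 2 * (1 - Real.cos k) ^ 2 - Real.sin k ^ 2) /
            Real.sqrt ((1 - Real.cos k) * (3 - Real.cos k)) with hf
  have heven : ∀ k, f (-k) = f k := by
    intro k; simp [hf, Real.cos_neg, Real.sin_neg, neg_sq]
  have habs : ∀ k ∈ Set.uIcc (-π) π, f k = GG |k| := by
    intro k hk
    rw [Set.uIcc_of_le (by linarith)] at hk
    rcases le_or_gt 0 k with h | h
    · rw [abs_of_nonneg h]
      exact ff_eq_GG k (Real.sin_nonneg_of_nonneg_of_le_pi (by linarith) (by linarith [hk.2]))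
    · rw [abs_of_neg h, ← heven k]
      exact ff_eq_GG (-k) (Real.sin_nonneg_of_nonneg_of_le_pi (by linarith) (by linarith [hk.1]))
  have hIcc : (∫ k in Set.Icc (-π) π, f k) = ∫ k in (-π)..π, f k := by
    rw [MeasureTheory.integral_Icc_eq_integral_Ioc, intervalIntegral.integral_of_le (by linarith)]
  have hGA : Continuous (fun k : ℝ => GG |k|) := contGG.comp continuous_abs
  have h01 : ∫ k in (-π)..(0:ℝ), GG |k| = ∫ k in (0:ℝ)..π, GG |k| := by
    have := intervalIntegral.integral_comp_neg (a := 0) (b := π) (fun k : ℝ => GG |k|)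
    simp only [abs_neg, neg_zero] at this
    exact this.symm
  have hsplit : ∫ k in (-π)..π, GG |k| = 2 * ∫ k in (0:ℝ)..π, GG k := by
    rw [← intervalIntegral.integral_add_adjacent_intervals
      (hGA.intervalIntegrable (-π) 0) (hGA.intervalIntegrable 0 π), h01]
    have he : ∫ k in (0:ℝ)..π, GG |k| = ∫ k in (0:ℝ)..π, GG k := by
      apply intervalIntegral.integral_congr
      intro x hx
      rw [Set.uIcc_of_le (le_of_lt hπ)] at hx
      show GG |x| = GG x
      rw [abs_of_nonneg hx.1]
    rw [he]; ring
  rw [hIcc, intervalIntegral.integral_congr habs, hsplit, integral_GG]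
  have h2 : Real.sqrt 2 ^ 2 = 2 := Real.sq_sqrt (by norm_num)
  have hπ' : π ≠ 0 := ne_of_gt hπ
  field_simp
  ring_nf
end

section
/- For every natural number $m$, $A_{m+1} = \sum_{k=0}^{m} \binom{m}{k}\,(k+1)!\,A_{m-k}$, where $A_m := \sum_{P} \prod_{Y \in P} |Y|!$, the sum ranging over all set partitions $P$ of $\{1,\dots,m\}$ and $|Y|$ denoting the cardinality of a block of $P$ (with the convention $A_0 = 1$). -/
open Finset

/-- `A m = ∑_P ∏_{Y ∈ P} |Y|!`, the sum over all set partitions `P` of `{1,…,m}`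
(with `A 0 = 1`, corresponding to the empty partition). -/
def A (m : ℕ) : ℕ :=
  ∑ P : Finpartition (Finset.univ : Finset (Fin m)), ∏ Y ∈ P.parts, Y.card.factorial

variable {α : Type*} [DecidableEq α]

/-- The sum over all finpartitions of an arbitrary finset. -/
def B (s : Finset α) : ℕ :=
  ∑ P : Finpartition s, ∏ Y ∈ P.parts, Y.card.factorial

lemma A_eq_B (m : ℕ) : A m = B (Finset.univ : Finset (Fin m)) := rfl

lemma B_empty : B (∅ : Finset α) = 1 := by
  have h : ∀ P : Finpartition (∅ : Finset α), P.parts = ∅ := fun P =>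
    Finpartition.parts_eq_empty_iff.2 rfl
  haveI : Unique (Finpartition (∅ : Finset α)) :=
    ⟨⟨Finpartition.empty _⟩, fun P => Finpartition.ext (by rw [h, h])⟩
  rw [B, Fintype.sum_unique, h, Finset.prod_empty]

lemma avoid_parts_of_mem {s : Finset α} (P : Finpartition s) {b : Finset α}
    (hb : b ∈ P.parts) : (P.avoid b).parts = P.parts.erase b := by
  ext c
  rw [Finpartition.mem_avoid, mem_erase]
  constructor
  · rintro ⟨d, hd, hdb, rfl⟩
    have hne : d ≠ b := fun h => hdb (h ▸ le_refl _)
    have hdisj : Disjoint d b := P.disjoint hd hb hne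
    rw [sdiff_eq_self_of_disjoint hdisj]
    exact ⟨hne, hd⟩
  · rintro ⟨hne, hc⟩
    have hdisj : Disjoint c b := P.disjoint hc hb hne
    exact ⟨c, hc, fun hle => P.ne_bot hc (hdisj.eq_bot_of_le hle),
      sdiff_eq_self_of_disjoint hdisj⟩

lemma B_insert {a : α} {s : Finset α} (ha : a ∉ s) :
    B (insert a s) = ∑ T ∈ s.powerset, (T.card + 1).factorial * B (s \ T) := by
  classical
  have hmem : a ∈ insert a s := mem_insert_self a s
  rw [B, ← Finset.sum_fiberwise_of_maps_to
    (g := fun P : Finpartition (insert a s : Finset α) => (P.part a).erase a)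
    (t := s.powerset) (fun P _ => by
      rw [mem_powerset]
      intro x hx
      rw [mem_erase] at hx
      have hsub : P.part a ⊆ insert a s := P.le (P.part_mem.2 hmem)
      rcases mem_insert.1 (hsub hx.2) with h | h
      · exact absurd h hx.1
      · exact h) _]
  refine Finset.sum_congr rfl fun T hT => ?_
  rw [mem_powerset] at hT
  have haT : a ∉ T := fun h => ha (hT h)
  have hb : (insert a T : Finset α) ≠ ⊥ := by
    simpa using Finset.insert_ne_empty a T
  have hab : Disjoint (s \ T) (insert a T) := by
    rw [Finset.disjoint_insert_right]
    exact ⟨by simp [ha], sdiff_disjoint⟩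
  have hc : (s \ T) ⊔ insert a T = insert a s := by
    ext x
    have hx := @hT x
    simp only [sup_eq_union, mem_union, mem_sdiff, mem_insert]
    tauto
  have hcopy : ∀ P : Finpartition (insert a s : Finset α), (P.part a).erase a = T →
      insert a s \ P.part a = s \ T := by
    intro P hP
    have hpa : a ∈ P.part a := P.mem_part hmem
    have hpart : P.part a = insert a T := by rw [← hP, Finset.insert_erase hpa]
    rw [hpart]
    ext x
    by_cases hx : x = a <;> simp [hx, ha, haT, mem_sdiff, mem_insert]
  rw [B, Finset.mul_sum]
  refine Finset.sum_bij'
    (fun P hP => (P.avoid (P.part a)).copy (hcopy P (mem_filter.1 hP).2))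
    (fun Q _ => Q.extend hb hab hc) (fun P _ => mem_univ _) (fun Q _ => ?_) ?_ ?_ ?_
  · -- extend lands in the fiber
    rw [mem_filter]
    refine ⟨mem_univ _, ?_⟩
    have h1 : insert a T ∈ (Q.extend hb hab hc).parts := by
      rw [Finpartition.extend_parts]; exact mem_insert_self _ _
    have h2 : (Q.extend hb hab hc).part a = insert a T :=
      Finpartition.part_eq_of_mem _ h1 (mem_insert_self a T)
    rw [h2, Finset.erase_insert haT]
  · -- left inverse
    intro P hP
    have hPT : (P.part a).erase a = T := (mem_filter.1 hP).2
    have hpa : a ∈ P.part a := P.mem_part hmem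
    have hpmem : P.part a ∈ P.parts := P.part_mem.2 hmem
    have hpart : P.part a = insert a T := by rw [← hPT, Finset.insert_erase hpa]
    apply Finpartition.ext
    rw [Finpartition.extend_parts, Finpartition.copy_parts, avoid_parts_of_mem P hpmem,
      ← hpart, Finset.insert_erase hpmem]
  · -- right inverse
    intro Q hQ
    have h1 : insert a T ∈ (Q.extend hb hab hc).parts := by
      rw [Finpartition.extend_parts]; exact mem_insert_self _ _
    have h2 : (Q.extend hb hab hc).part a = insert a T :=
      Finpartition.part_eq_of_mem _ h1 (mem_insert_self a T)
    have h3 : insert a T ∉ Q.parts := by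
      intro h
      have := Q.le h (mem_insert_self a T)
      rw [mem_sdiff] at this
      exact ha this.1
    apply Finpartition.ext
    rw [Finpartition.copy_parts, avoid_parts_of_mem _ ((Q.extend hb hab hc).part_mem.2 hmem),
      h2, Finpartition.extend_parts, Finset.erase_insert h3]
  · -- weights
    intro P hP
    have hPT : (P.part a).erase a = T := (mem_filter.1 hP).2
    have hpa : a ∈ P.part a := P.mem_part hmem
    have hpmem : P.part a ∈ P.parts := P.part_mem.2 hmem
    have hpart : P.part a = insert a T := by rw [← hPT, Finset.insert_erase hpa]
    have hcard : (P.part a).card = T.card + 1 := by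
      rw [hpart, Finset.card_insert_of_notMem haT]
    rw [Finpartition.copy_parts, avoid_parts_of_mem P hpmem]
    conv_lhs => rw [← Finset.insert_erase hpmem]
    rw [Finset.prod_insert (Finset.notMem_erase _ _), hcard]

lemma B_insert_grouped {a : α} {s : Finset α} (ha : a ∉ s)
    (h : ∀ T ∈ s.powerset, B (s \ T) = A (s.card - T.card)) :
    B (insert a s) =
      ∑ k ∈ Finset.range (s.card + 1), s.card.choose k * (k + 1).factorial * A (s.card - k) := by
  classical
  rw [B_insert ha, ← Finset.sum_fiberwise_of_maps_to (g := Finset.card)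
    (t := Finset.range (s.card + 1))
    (fun T hT => mem_range.2 (Nat.lt_succ_of_le (card_le_card (mem_powerset.1 hT)))) _]
  refine Finset.sum_congr rfl fun k hk => ?_
  have h1 : ∑ T ∈ s.powerset.filter (fun T => T.card = k), (T.card + 1).factorial * B (s \ T)
      = ∑ T ∈ s.powerset.filter (fun T => T.card = k), (k + 1).factorial * A (s.card - k) := by
    refine Finset.sum_congr rfl fun T hT => ?_
    obtain ⟨hT1, hT2⟩ := mem_filter.1 hT
    rw [h T hT1, hT2]
  rw [h1, Finset.sum_const, ← Finset.powersetCard_eq_filter, Finset.card_powersetCard,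
    smul_eq_mul, mul_assoc]

lemma B_eq_A : ∀ n : ℕ, ∀ {β : Type} [DecidableEq β] (s : Finset β), s.card = n → B s = A n := by
  intro n
  induction n using Nat.strong_induction_on with
  | _ n ih =>
    have key : ∀ {β : Type} [DecidableEq β] (s : Finset β), s.card = n → B s = A n := by
      intro β _ s hs
      match n, hs with
      | 0, hs =>
        rw [Finset.card_eq_zero.1 hs, B_empty, A_eq_B, Finset.univ_eq_empty, B_empty]
      | (n + 1), hs =>
        have hform : ∀ {γ : Type} [DecidableEq γ] (t : Finset γ), t.card = n + 1 →
            B t = ∑ k ∈ Finset.range (n + 1), n.choose k * (k + 1).factorial * A (n - k) := by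
          intro γ _ t ht
          obtain ⟨a, haa⟩ := Finset.card_pos.1 (show 0 < t.card by omega)
          have ha' : a ∉ t.erase a := Finset.notMem_erase a t
          have hcard' : (t.erase a).card = n := by
            rw [Finset.card_erase_of_mem haa, ht]; omega
          have hh : ∀ T ∈ (t.erase a).powerset,
              B (t.erase a \ T) = A ((t.erase a).card - T.card) := by
            intro T hT
            have hc : (t.erase a \ T).card = (t.erase a).card - T.card :=
              Finset.card_sdiff_of_subset (mem_powerset.1 hT)
            rw [hcard'] at hc ⊢
            exact ih (n - T.card) (Nat.lt_succ_of_le (Nat.sub_le n T.card)) _ hc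
          rw [← Finset.insert_erase haa, B_insert_grouped ha' hh, hcard']
        rw [hform s hs, A_eq_B, hform (Finset.univ : Finset (Fin (n + 1))) (by simp)]
    exact @key

/-- The recursion `A_{m+1} = ∑_{k=0}^{m} (m choose k) (k+1)! A_{m-k}`. -/
theorem stmt_9 (m : ℕ) :
    A (m + 1) = ∑ k ∈ Finset.range (m + 1), m.choose k * (k + 1).factorial * A (m - k) := by
  classical
  rw [A_eq_B]
  set t : Finset (Fin (m + 1)) := Finset.univ
  have ht : t.card = m + 1 := by simp [t]
  obtain ⟨a, haa⟩ := Finset.card_pos.1 (show 0 < t.card by omega)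
  have ha' : a ∉ t.erase a := Finset.notMem_erase a t
  have hcard' : (t.erase a).card = m := by rw [Finset.card_erase_of_mem haa, ht]; omega
  have hh : ∀ T ∈ (t.erase a).powerset,
      B (t.erase a \ T) = A ((t.erase a).card - T.card) := by
    intro T hT
    exact B_eq_A _ _ (Finset.card_sdiff_of_subset (mem_powerset.1 hT))
  rw [← Finset.insert_erase haa, B_insert_grouped ha' hh, hcard']
end
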